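/- In the weighted Bucklin construction (W-votes summing to 2K all ranking p first after modification, plus votes a ≻ b ≻ p ≻ c and c ≻ b ≻ a ≻ p each of weight K, tie-breaking p ≻ a ≻ b ≻ c), if p wins, then no W-vote of positive weight places b in the second position, and the total weight of W-votes placing a second equals exactly K. -/

import Mathlib

/-- The four candidates. -/
inductive Cand : Type
  | p | a | b | c
deriving DecidableEq

open Cand

/-- Total weight of the votes ranking `x` within the top `ℓ` positions. -/
def topW (E : Multiset (ℕ × List Cand)) (ℓ : ℕ) (x : Cand) : ℕ :=
  (E.map fun v => if v.2.idxOf x < ℓ then v.1 else 0).sum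

/-- Total weight of the election. -/
def totalW (E : Multiset (ℕ × List Cand)) : ℕ :=
  (E.map Prod.fst).sum

/-- Bucklin score of `x`: least `ℓ` such that the weight of votes ranking `x` in the
top `ℓ` positions is strictly more than half the total weight. -/
noncomputable def bucklinScore (E : Multiset (ℕ × List Cand)) (x : Cand) : ℕ :=
  sInf {ℓ : ℕ | totalW E < 2 * topW E ℓ x}

/-- `x` wins with a score to be minimized (ties broken by the priority order). -/
def WinsMin (score : Cand → ℕ) (prio : Cand → ℕ) (x : Cand) : Prop :=
  ∀ y, y ≠ x → score x < score y ∨ (score x = score y ∧ prio x < prio y)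

/-- Tie-breaking order `p ≻ a ≻ b ≻ c`. -/
def prioPABC : Cand → ℕ
  | Cand.p => 0
  | Cand.a => 1
  | Cand.b => 2
  | Cand.c => 3

lemma topW_add (E F : Multiset (ℕ × List Cand)) (ℓ : ℕ) (x : Cand) :
    topW (E + F) ℓ x = topW E ℓ x + topW F ℓ x := by
  simp [topW]

lemma topW_mono (E : Multiset (ℕ × List Cand)) {ℓ ℓ' : ℕ} (h : ℓ ≤ ℓ') (x : Cand) :
    topW E ℓ x ≤ topW E ℓ' x := by
  refine Multiset.sum_map_le_sum_map _ _ ?_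
  intro v _
  split_ifs with h1 h2
  · exact le_refl _
  · exact absurd (lt_of_lt_of_le h1 h) h2
  · exact Nat.zero_le _
  · exact le_refl _

lemma vote_shape {v : ℕ × List Cand} (h1 : v.2.Perm [p, a, b, c])
    (h2 : v.2.head? = some p) :
    ∃ x rest, v.2 = p :: x :: rest ∧ (x = a ∨ x = b ∨ x = c) := by
  have hlen : v.2.length = 4 := h1.length_eq
  match hv : v.2, hlen with
  | q :: x :: rest, _ =>
    rw [hv] at h2 h1
    simp at h2
    subst h2
    have hx : x ∈ p :: x :: rest := by simp
    have := h1.mem_iff.mp hx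
    refine ⟨x, rest, rfl, ?_⟩
    have hperm := (List.perm_cons p).mp h1
    have : x ∈ [a, b, c] := hperm.mem_iff.mp (by simp)
    simpa using this

lemma second_iff {x : Cand} {rest : List Cand} {q : Cand} (hq : q ≠ p) :
    List.idxOf q (p :: x :: rest) < 2 ↔ x = q := by
  rw [List.idxOf_cons_ne _ (fun h => hq h.symm)]
  constructor
  · intro h
    by_contra hxq
    rw [List.idxOf_cons_ne _ (fun h => hxq h)] at h
    omega
  · intro h
    subst h
    simp [List.idxOf_cons_self]

lemma filter_sum (V : Multiset (ℕ × List Cand)) (pred : ℕ × List Cand → Prop)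
    [DecidablePred pred] :
    ((V.filter pred).map Prod.fst).sum = (V.map fun v => if pred v then v.1 else 0).sum := by
  induction V using Multiset.induction with
  | empty => simp
  | cons a s ih => by_cases h : pred a <;> simp [h, ih]

/-- Bucklin construction, backward direction: if the `W`-votes (total weight `2K`) all
rank `p` first and `p` wins the weighted Bucklin election (fixed votes `a ≻ b ≻ p ≻ c`
and `c ≻ b ≻ a ≻ p` each of weight `K`, tie-breaking `p ≻ a ≻ b ≻ c`), then no `W`-vote
of positive weight places `b` second, and the total weight of `W`-votes placing `a`
second is exactly `K`. -/
theorem stmt_10 (K : ℕ) (hK : 0 < K) (W : Multiset ℕ)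
    (hpos : ∀ w ∈ W, 0 < w) (hsum : W.sum = 2 * K)
    (V : Multiset (ℕ × List Cand)) (hV : V.map Prod.fst = W)
    (hrank : ∀ v ∈ V, v.2.Perm [p, a, b, c] ∧ v.2.head? = some p) :
    WinsMin (bucklinScore (V + {(K, [a, b, p, c]), (K, [c, b, a, p])})) prioPABC p →
      (∀ v ∈ V, 0 < v.1 → v.2[1]? ≠ some b) ∧
      ((V.filter fun v => v.2[1]? = some a).map Prod.fst).sum = K := by
  intro hwin
  set F : Multiset (ℕ × List Cand) := {(K, [a, b, p, c]), (K, [c, b, a, p])} with hF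
  set E := V + F with hE
  -- total weight
  have htotV : totalW V = 2 * K := by rw [totalW, hV, hsum]
  have htotF : totalW F = 2 * K := by simp [totalW, hF]; ring
  have htot : totalW E = 4 * K := by
    have : totalW E = totalW V + totalW F := by simp [totalW, hE]
    rw [this, htotV, htotF]; ring
  -- topW of V at level 2 for q ≠ p equals sum over votes with q second
  have hsecond : ∀ q, q ≠ p → topW V 2 q =
      (V.map fun v => if v.2[1]? = some q then v.1 else 0).sum := by
    intro q hq
    rw [topW]
    congr 1
    apply Multiset.map_congr rfl
    intro v hv
    obtain ⟨x, rest, hx, _⟩ := vote_shape (hrank v hv).1 (hrank v hv).2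
    rw [hx]
    have h2 : (p :: x :: rest)[1]? = some x := by simp
    rw [h2]
    by_cases hxq : x = q
    · simp [hxq, (second_iff hq).mpr rfl]
    · have : ¬ List.idxOf q (p :: x :: rest) < 2 := fun h => hxq ((second_iff hq).mp h)
      simp [this, hxq, Option.some_inj]
  -- topW of V at any level ≥ 1 for p
  have hVp : ∀ ℓ, 1 ≤ ℓ → topW V ℓ p = 2 * K := by
    intro ℓ hℓ
    rw [topW]
    have : (V.map fun v => if v.2.idxOf p < ℓ then v.1 else 0) = V.map Prod.fst := by
      apply Multiset.map_congr rfl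
      intro v hv
      obtain ⟨x, rest, hx, _⟩ := vote_shape (hrank v hv).1 (hrank v hv).2
      rw [hx]
      simp [List.idxOf_cons_self]
      omega
    rw [this, hV, hsum]
  -- topW of F at level 2
  have hFp2 : topW F 2 p = 0 := by simp [topW, hF]
  have hFa2 : topW F 2 a = K := by simp [topW, hF]
  have hFb2 : topW F 2 b = K + K := by simp [topW, hF]
  have hFc2 : topW F 2 c = K := by simp [topW, hF]
  have hFp3 : topW F 3 p = K := by simp [topW, hF]
  -- score of p is at least 3 and 3 is in its set
  have hmemp3 : (3 : ℕ) ∈ {ℓ : ℕ | totalW E < 2 * topW E ℓ p} := by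
    have : topW E 3 p = 2 * K + K := by rw [hE, topW_add, hVp 3 (by norm_num), hFp3]
    simp only [Set.mem_setOf_eq, this, htot]
    omega
  have hscorep : 3 ≤ bucklinScore E p := by
    rw [bucklinScore]
    refine le_csInf ⟨3, hmemp3⟩ ?_
    intro ℓ hℓ
    by_contra hlt
    push_neg at hlt
    have hle2 : ℓ ≤ 2 := by omega
    have : topW E ℓ p ≤ topW E 2 p := topW_mono E hle2 p
    have h2 : topW E 2 p = 2 * K := by rw [hE, topW_add, hVp 2 (by norm_num), hFp2]; omega
    simp only [Set.mem_setOf_eq, htot] at hℓ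
    omega
  -- for y ≠ p, score y ≥ 3, hence topW E 2 y ≤ 2K
  have hkey : ∀ y, y ≠ p → topW E 2 y ≤ 2 * K := by
    intro y hy
    have h3 : 3 ≤ bucklinScore E y := by
      rcases hwin y hy with h | ⟨h, _⟩
      · omega
      · omega
    by_contra hgt
    push_neg at hgt
    have hmem : (2 : ℕ) ∈ {ℓ : ℕ | totalW E < 2 * topW E ℓ y} := by
      simp only [Set.mem_setOf_eq, htot]; omega
    have := Nat.sInf_le hmem
    rw [bucklinScore] at h3
    omega
  have hab : (a : Cand) ≠ p := by decide
  have hbb : (b : Cand) ≠ p := by decide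
  have hcb : (c : Cand) ≠ p := by decide
  -- b second has zero weight
  have hBsum : (V.map fun v => if v.2[1]? = some b then v.1 else 0).sum = 0 := by
    have h1 := hkey b hbb
    rw [hE, topW_add, hFb2, hsecond b hbb] at h1
    omega
  have part1 : ∀ v ∈ V, 0 < v.1 → v.2[1]? ≠ some b := by
    intro v hv hw hb2
    have hmem : v.1 ∈ V.map fun v => if v.2[1]? = some b then v.1 else 0 :=
      Multiset.mem_map.mpr ⟨v, hv, by simp [hb2]⟩
    have := Multiset.single_le_sum (fun x _ => Nat.zero_le x) _ hmem
    omega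
  -- a + b + c second weights sum to 2K
  have habc : (V.map fun v => if v.2[1]? = some a then v.1 else 0).sum +
      (V.map fun v => if v.2[1]? = some b then v.1 else 0).sum +
      (V.map fun v => if v.2[1]? = some c then v.1 else 0).sum = 2 * K := by
    rw [← Multiset.sum_map_add, ← Multiset.sum_map_add]
    have : (V.map fun v => ((if v.2[1]? = some a then v.1 else 0) +
        (if v.2[1]? = some b then v.1 else 0)) + (if v.2[1]? = some c then v.1 else 0))
        = V.map Prod.fst := by
      apply Multiset.map_congr rfl
      intro v hv
      obtain ⟨x, rest, hx, hxm⟩ := vote_shape (hrank v hv).1 (hrank v hv).2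
      rw [hx]
      have h2 : (p :: x :: rest)[1]? = some x := by simp
      rw [h2]
      rcases hxm with rfl | rfl | rfl <;> simp
    rw [this, hV, hsum]
  -- a ≤ K, c ≤ K
  have hA : (V.map fun v => if v.2[1]? = some a then v.1 else 0).sum ≤ K := by
    have h1 := hkey a hab
    rw [hE, topW_add, hFa2, hsecond a hab] at h1
    omega
  have hC : (V.map fun v => if v.2[1]? = some c then v.1 else 0).sum ≤ K := by
    have h1 := hkey c hcb
    rw [hE, topW_add, hFc2, hsecond c hcb] at h1
    omega
  refine ⟨part1, ?_⟩
  rw [filter_sum]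
  omega
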